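/- Let N be a positive natural number, M an N×N matrix over the bicomplex numbers 𝔹ℂ, and Q = [[0, M̄],[M, 0]] the 2N×2N block matrix. Then the characteristic polynomial of Q splits completely over ℂ(j): there exist λ₁, …, λ_{2N} ∈ ℂ(j) such that the characteristic polynomial of Q equals ∏_{k=1}^{2N} (X − λ_k). -/

import Mathlib

open scoped TensorProduct

/-- The bicomplex numbers `𝔹ℂ = ℂ ⊗[ℝ] ℂ`, a commutative ℝ-algebra. -/
abbrev BC : Type := ℂ ⊗[ℝ] ℂ

/-- The first imaginary unit `i` of the bicomplex numbers. -/
noncomputable def BC.i : BC := Complex.I ⊗ₜ[ℝ] (1 : ℂ)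

/-- The second imaginary unit `j` of the bicomplex numbers. -/
noncomputable def BC.j : BC := (1 : ℂ) ⊗ₜ[ℝ] Complex.I

/-- Bar-conjugation `z₁ + j z₂ ↦ z̄₁ + j z̄₂` (complex conjugation in `i`),
a ring (indeed ℝ-algebra) homomorphism of `𝔹ℂ`. -/
noncomputable def BC.bar : BC →ₐ[ℝ] BC :=
  Algebra.TensorProduct.map Complex.conjAe.toAlgHom (AlgHom.id ℝ ℂ)

/-- The subalgebra `ℂ(j) = {x₁ + j x₂ : x₁, x₂ ∈ ℝ}` of `𝔹ℂ`,
realized as the range of the canonical map `ℂ → ℂ ⊗[ℝ] ℂ`, `z ↦ 1 ⊗ z`. -/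
noncomputable def BC.Cj : Subalgebra ℝ BC :=
  (Algebra.TensorProduct.includeRight : ℂ →ₐ[ℝ] BC).range

/-- `Re^i(b) = (b + b̄)/2`. -/
noncomputable def BC.ReI (b : BC) : BC := (2 : ℝ)⁻¹ • (b + BC.bar b)

/-- `Im^i(b) = (b - b̄)/(2i)`; since `(2i)⁻¹ = -i/2`, this equals `((b̄ - b) * i)/2`. -/
noncomputable def BC.ImI (b : BC) : BC := (2 : ℝ)⁻¹ • ((BC.bar b - b) * BC.i)

noncomputable def BCpi1 : BC →ₐ[ℝ] ℂ := Algebra.TensorProduct.lmul' ℝ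
noncomputable def BCpi2 : BC →ₐ[ℝ] ℂ := BCpi1.comp BC.bar
noncomputable def BCpsi : BC →ₐ[ℝ] ℂ × ℂ := BCpi1.prod BCpi2

lemma BC.bar_comp_bar : BC.bar.comp BC.bar = AlgHom.id ℝ BC := by
  apply Algebra.TensorProduct.ext <;> ext <;> simp [BC.bar]

lemma BCpsi_surjective : Function.Surjective BCpsi := by
  intro ⟨a, b⟩
  refine ⟨(1 : ℂ) ⊗ₜ[ℝ] ((a+b)/2) + Complex.I ⊗ₜ[ℝ] (-Complex.I*(a-b)/2), ?_⟩
  simp [BCpsi, BCpi1, BCpi2, BC.bar, Prod.ext_iff, Algebra.TensorProduct.lmul'_apply_tmul]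
  constructor <;> ring_nf <;> simp [Complex.I_sq] <;> ring

lemma BCpsi_injective : Function.Injective BCpsi := by
  have hdim : Module.finrank ℝ BC = Module.finrank ℝ (ℂ × ℂ) := by
    simp [Module.finrank_tensorProduct, Complex.finrank_real_complex]
  exact (LinearMap.injective_iff_surjective_of_finrank_eq_finrank
    (f := BCpsi.toLinearMap) hdim).mpr BCpsi_surjective

lemma BCpi1_includeRight (w : ℂ) :
    BCpi1 ((Algebra.TensorProduct.includeRight : ℂ →ₐ[ℝ] BC) w) = w := by
  simp [BCpi1, Algebra.TensorProduct.lmul'_apply_tmul]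

lemma BCpi2_includeRight (w : ℂ) :
    BCpi2 ((Algebra.TensorProduct.includeRight : ℂ →ₐ[ℝ] BC) w) = w := by
  simp [BCpi2, BCpi1, BC.bar, Algebra.TensorProduct.lmul'_apply_tmul]

lemma charpoly_fromBlocks_swap {n : Type*} [DecidableEq n] [Fintype n] {R : Type*} [CommRing R]
    (A B : Matrix n n R) :
    (Matrix.fromBlocks 0 B A 0).charpoly = (Matrix.fromBlocks 0 A B 0).charpoly := by
  rw [← Matrix.charpoly_reindex (Equiv.sumComm n n) (Matrix.fromBlocks 0 B A 0)]
  congr 1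
  rw [Matrix.reindex_apply]
  simp [Matrix.fromBlocks_submatrix_sum_swap_sum_swap]

open Polynomial in
theorem charpoly_Q_splits_over_Cj (N : ℕ) (hN : 0 < N)
    (M : Matrix (Fin N) (Fin N) BC)
    (Q : Matrix (Fin N ⊕ Fin N) (Fin N ⊕ Fin N) BC)
    (hQ : Q = Matrix.fromBlocks 0 (M.map BC.bar) M 0) :
    ∃ lam : Fin (2 * N) → BC, (∀ k, lam k ∈ BC.Cj) ∧
      Q.charpoly = ∏ k : Fin (2 * N), (X - C (lam k)) := by
  subst hQ
  set π₁ : BC →+* ℂ := BCpi1.toRingHom with hπ₁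
  set π₂ : BC →+* ℂ := BCpi2.toRingHom with hπ₂
  set ι : ℂ →+* BC := (Algebra.TensorProduct.includeRight : ℂ →ₐ[ℝ] BC).toRingHom with hι
  set Q := Matrix.fromBlocks 0 (M.map BC.bar) M 0 with hQdef
  -- the two projected matrices
  have hmap1 : Q.map π₁ = Matrix.fromBlocks 0 (M.map π₂) (M.map π₁) 0 := by
    rw [hQdef]
    ext (i|i) (j|j) <;>
      simp [Matrix.fromBlocks, Matrix.map_apply, hπ₁, hπ₂, BCpi2]
  have hbar2 : ∀ x : BC, π₂ (BC.bar x) = π₁ x := by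
    intro x
    have := congrArg (fun f => (f : BC →ₐ[ℝ] BC) x) BC.bar_comp_bar
    simp only [AlgHom.comp_apply, AlgHom.id_apply] at this
    simp [hπ₂, hπ₁, BCpi2, this]
  have hmap2 : Q.map π₂ = Matrix.fromBlocks 0 (M.map π₁) (M.map π₂) 0 := by
    rw [hQdef]
    ext (i|i) (j|j) <;>
      simp [Matrix.fromBlocks, Matrix.map_apply, hbar2]
  set p : ℂ[X] := (Q.map π₁).charpoly with hp
  have hcp2 : (Q.map π₂).charpoly = p := by
    rw [hmap2, hp, hmap1, charpoly_fromBlocks_swap]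
  -- key: Q.charpoly is the lift of p
  have key : Q.charpoly = p.map ι := by
    ext n
    apply BCpsi_injective
    have e1 : ∀ x : BC, BCpsi x = (π₁ x, π₂ x) := fun x => rfl
    rw [e1, e1]
    have c1 : π₁ (Q.charpoly.coeff n) = p.coeff n := by
      rw [← Polynomial.coeff_map, ← Matrix.charpoly_map]
    have c2 : π₂ (Q.charpoly.coeff n) = p.coeff n := by
      rw [← Polynomial.coeff_map, ← Matrix.charpoly_map, hcp2]
    rw [c1, c2, Polynomial.coeff_map]
    exact Prod.ext (BCpi1_includeRight _).symm (BCpi2_includeRight _).symm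
  have hm : p.Monic := Matrix.charpoly_monic _
  have hsp : p.Splits := IsAlgClosed.splits p
  have hdeg : p.natDegree = 2 * N := by
    rw [hp, Matrix.charpoly_natDegree_eq_dim]
    simp [two_mul]
  have hcard : p.roots.card = 2 * N := by
    rw [(Polynomial.splits_iff_card_roots).mp hsp, hdeg]
  set l := p.roots.toList with hl
  have hlen : l.length = 2 * N := by rw [hl, Multiset.length_toList, hcard]
  have hprod : ∀ (g : ℂ → Polynomial BC),
      (l.map g).prod = ∏ k : Fin (2 * N), g (l.get (Fin.cast hlen.symm k)) := by
    intro g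
    conv_lhs => rw [← List.ofFn_get l]
    rw [List.map_ofFn]
    rw [List.prod_ofFn (f := g ∘ l.get)]
    exact Fintype.prod_equiv (finCongr hlen) _ _ (fun i => by simp)
  refine ⟨fun k => ι (l.get (Fin.cast hlen.symm k)), fun k => ⟨_, rfl⟩, ?_⟩
  rw [key, hsp.eq_prod_roots_of_monic hm, ← Multiset.coe_toList p.roots, ← hl,
    Multiset.map_coe, Multiset.prod_coe, Polynomial.map_list_prod, List.map_map]
  rw [show (Polynomial.map ι ∘ fun a => X - C a) = fun a => X - C (ι a) by
    funext a; simp]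
  exact hprod _
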